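/- Let {τ_j}_{j=1}^n be unit vectors in ℝ^d with ⟨τ_j, τ_k⟩ ≤ cos θ for all j ≠ k, and suppose c > 0 and φ : [-1,1] → ℝ satisfy ∑_{j,k} φ(⟨τ_j, τ_k⟩) ≥ 0, φ(r) + c ≤ 0 for all r ∈ [-1, cos θ], and φ(1) + c ≤ 1. Then n ≤ 1/c. -/

import Mathlib

open scoped RealInnerProductSpace

theorem pfender_bound_one_over_c {d n : ℕ} (θ : ℝ) (τ : Fin n → EuclideanSpace ℝ (Fin d))
    (hunit : ∀ j, ‖τ j‖ = 1)
    (hcode : ∀ j k, j ≠ k → ⟪τ j, τ k⟫ ≤ Real.cos θ)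
    (c : ℝ) (hc : 0 < c) (φ : ℝ → ℝ)
    (h1 : 0 ≤ ∑ j, ∑ k, φ ⟪τ j, τ k⟫)
    (h2 : ∀ r : ℝ, -1 ≤ r → r ≤ Real.cos θ → φ r + c ≤ 0)
    (h3 : φ 1 + c ≤ 1) :
    (n : ℝ) ≤ 1 / c := by
  rcases Nat.eq_zero_or_pos n with hn | hn
  · subst hn; simp; positivity
  have hself : ∀ j, ⟪τ j, τ j⟫ = 1 := by
    intro j
    rw [real_inner_self_eq_norm_sq, hunit j]; norm_num
  have hbound : ∀ j k : Fin n, φ ⟪τ j, τ k⟫ ≤ if j = k then φ 1 else -c := by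
    intro j k
    by_cases h : j = k
    · simp [h, hself, hunit]
    · simp only [h, if_false]
      have hlow : -1 ≤ ⟪τ j, τ k⟫ := by
        have := abs_real_inner_le_norm (τ j) (τ k)
        rw [hunit, hunit] at this
        linarith [abs_le.mp (by linarith : |⟪τ j, τ k⟫| ≤ 1)]
      linarith [h2 _ hlow (hcode j k h)]
  have hsum : ∑ j, ∑ k, φ ⟪τ j, τ k⟫ ≤ (n : ℝ) * φ 1 + ((n : ℝ) * n - n) * (-c) := by
    calc ∑ j, ∑ k, φ ⟪τ j, τ k⟫
        ≤ ∑ j : Fin n, ∑ k : Fin n, (if j = k then φ 1 else -c) :=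
          Finset.sum_le_sum fun j _ => Finset.sum_le_sum fun k _ => hbound j k
      _ = ∑ _j : Fin n, ((φ 1 + c) + (n : ℝ) * (-c)) := by
          refine Finset.sum_congr rfl fun j _ => ?_
          have he : (fun k : Fin n => if j = k then φ 1 else -c)
              = fun k => (if j = k then φ 1 + c else 0) + (-c) := by
            funext k; by_cases h : j = k <;> simp [h]
          rw [he, Finset.sum_add_distrib, Finset.sum_ite_eq]
          simp
      _ = (n : ℝ) * φ 1 + ((n : ℝ) * n - n) * (-c) := by
          simp; ring
  have hn' : (0 : ℝ) < n := by exact_mod_cast hn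
  have key : (n : ℝ) * n * c ≤ n := by nlinarith
  rw [le_div_iff₀ hc]
  nlinarith
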